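/- Let H be a complex Hilbert space, U the group of unitary operators on H, Z the center of U, and K := U/Z the quotient group; K acts on U by conjugation, k[u] := V u V⁻¹ for any representative V ∈ U of k ∈ K (this is well defined since Z is central). Let Γ be a group, G an abelian group written additively, N a subgroup of G, π : G → G/N the quotient homomorphism, and χ : Γ → G/N a group homomorphism. Suppose λ : Γ × G/N → K and μ : G × G/N → K satisfy λ(ba, z) = λ(b, z + χ(a)) · λ(a, z), μ(g + h, z) = μ(g, z + π(h)) · μ(h, z), and λ(a, z + π(g)) · μ(g, z) = μ(g, z + χ(a)) · λ(a, z) for all a, b ∈ Γ, g, h ∈ G, z ∈ G/N. Define ν : (Γ × G) × G/N → K by ν((a,g), z) := λ(a, z + π(g)) · μ(g, z), and for x = (a, g) ∈ Γ × G write z · x := z + χ(a) + π(g). Then for a function n : Γ × G × G/N → U the following are equivalent: (1) n(yx, z) = ν(x, z)⁻¹[n(y, z · x)] · n(x, z) for all x, y ∈ Γ × G (with componentwise multiplication on Γ × G) and all z ∈ G/N; (2) the functions l(a, z) := n(a, 0, z) and m(g, z) := n(1, g, z) satisfy l(ba, z) = λ(a, z)⁻¹[l(b, z + χ(a))] ·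 l(a, z), m(g + h, z) = μ(g, z)⁻¹[m(h, z + π(g))] · m(g, z), λ(a, z)⁻¹[m(g, z + χ(a))] · l(a, z) = μ(g, z)⁻¹[l(a, z + π(g))] · m(g, z), and n(a, g, z) = μ(g, z)⁻¹[l(a, z + π(g))] · m(g, z), for all a, b ∈ Γ, g, h ∈ G, z ∈ G/N. -/

import Mathlib

lemma statement1_aux {U K : Type*} [Group U] [Group K] (α : K →* MulAut U)
    (A A' B B' C : K) (La La' Lb Mg Mh Mh' : U)
    (hK : A' * B = B' * A)
    (h3 : α B⁻¹ La' * Mh = α A⁻¹ Mh' * La) :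
    α (B * C)⁻¹ (α A'⁻¹ Lb * La') * (α C⁻¹ Mh * Mg) =
      α (A * C)⁻¹ (α B'⁻¹ Lb * Mh') * (α C⁻¹ La * Mg) := by
  have hK' : α C⁻¹ (α B⁻¹ (α A'⁻¹ Lb)) = α C⁻¹ (α A⁻¹ (α B'⁻¹ Lb)) := by
    have h : α (A' * B)⁻¹ = α (B' * A)⁻¹ := by rw [hK]
    have := congrArg (fun f : MulAut U => f Lb) h
    simp only [mul_inv_rev, map_mul, MulAut.mul_apply] at this
    rw [this]
  have h3' : α C⁻¹ (α B⁻¹ La') * α C⁻¹ Mh = α C⁻¹ (α A⁻¹ Mh') * α C⁻¹ La := by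
    have := congrArg (α C⁻¹) h3
    simpa [map_mul] using this
  simp only [mul_inv_rev, map_mul, MulAut.mul_apply]
  rw [hK']
  simp only [mul_assoc]
  congr 1
  rw [← mul_assoc, ← mul_assoc, h3']



/-- The conjugation action of the projective unitary group
`PU(H) = U(H) / center U(H)` on the unitary group `U(H)`: a class `k` acts by
`k[u] = V * u * V⁻¹` for any representative `V` of `k`; this is well defined since the
center acts trivially by conjugation. -/
noncomputable def projUnitaryConj (H : Type*) [NormedAddCommGroup H] [InnerProductSpace ℂ H]
    [CompleteSpace H] :
    (unitary (H →L[ℂ] H) ⧸ Subgroup.center (unitary (H →L[ℂ] H))) →*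
      MulAut (unitary (H →L[ℂ] H)) :=
  QuotientGroup.lift _ MulAut.conj (by
    intro z hz
    ext u
    rw [MulAut.conj_apply, MulAut.one_apply, Subgroup.mem_center_iff] at *
    rw [← hz u, mul_inv_cancel_right])

/-- Outer conjugation cocycles for the joint group `Γ × G` are equivalent to compatible pairs
of cocycles `(l, m)`:  a unitary-valued function `n` on `Γ × G × G/N` satisfies the joint
cocycle identity (1) iff the functions `l(a,z) := n(a,0,z)` and `m(g,z) := n(1,g,z)`
satisfy the three cocycle/compatibility identities and reconstruct `n` as in (2).
Here `U = unitary (H →L[ℂ] H)` and `K = U ⧸ center U` acts on `U` by conjugation. -/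
theorem statement1 {H : Type*} [NormedAddCommGroup H] [InnerProductSpace ℂ H] [CompleteSpace H]
    {Γ G : Type*} [Group Γ] [AddCommGroup G] (N : AddSubgroup G)
    (χ : Γ → G ⧸ N) (hχ : ∀ a b : Γ, χ (a * b) = χ a + χ b)
    (lam : Γ → G ⧸ N →
      (unitary (H →L[ℂ] H) ⧸ Subgroup.center (unitary (H →L[ℂ] H))))
    (mu : G → G ⧸ N →
      (unitary (H →L[ℂ] H) ⧸ Subgroup.center (unitary (H →L[ℂ] H))))
    (hlam : ∀ (a b : Γ) (z : G ⧸ N), lam (b * a) z = lam b (z + χ a) * lam a z)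
    (hmu : ∀ (g h : G) (z : G ⧸ N), mu (g + h) z = mu g (z + (h : G ⧸ N)) * mu h z)
    (hcomm : ∀ (a : Γ) (g : G) (z : G ⧸ N),
      lam a (z + (g : G ⧸ N)) * mu g z = mu g (z + χ a) * lam a z)
    (n : Γ → G → G ⧸ N → unitary (H →L[ℂ] H)) :
    (∀ (x y : Γ × G) (z : G ⧸ N),
        n (y.1 * x.1) (y.2 + x.2) z =
          projUnitaryConj H (lam x.1 (z + (x.2 : G ⧸ N)) * mu x.2 z)⁻¹
              (n y.1 y.2 (z + χ x.1 + (x.2 : G ⧸ N))) *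
            n x.1 x.2 z) ↔
      (∀ (a b : Γ) (g h : G) (z : G ⧸ N),
        n (b * a) 0 z =
            projUnitaryConj H (lam a z)⁻¹ (n b 0 (z + χ a)) * n a 0 z ∧
        n 1 (g + h) z =
            projUnitaryConj H (mu g z)⁻¹ (n 1 h (z + (g : G ⧸ N))) * n 1 g z ∧
        projUnitaryConj H (lam a z)⁻¹ (n 1 g (z + χ a)) * n a 0 z =
            projUnitaryConj H (mu g z)⁻¹ (n a 0 (z + (g : G ⧸ N))) * n 1 g z ∧
        n a g z =
            projUnitaryConj H (mu g z)⁻¹ (n a 0 (z + (g : G ⧸ N))) * n 1 g z) := by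
  have hχ1 : χ 1 = 0 := by
    have := hχ 1 1
    rw [one_mul] at this
    exact (left_eq_add.mp this)
  have hlam1 : ∀ z, lam 1 z = 1 := by
    intro z
    have := hlam 1 1 z
    rw [mul_one, hχ1, add_zero] at this
    exact (right_eq_mul.mp this)
  have hmu0 : ∀ z, mu 0 z = 1 := by
    intro z
    have := hmu 0 0 z
    simp only [add_zero, QuotientAddGroup.mk_zero] at this
    exact (right_eq_mul.mp this)
  constructor
  · intro h a b g hh z
    have h1 : n (b * a) 0 z =
        projUnitaryConj H (lam a z)⁻¹ (n b 0 (z + χ a)) * n a 0 z := by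
      have key := h (a, 0) (b, 0) z
      simpa [hmu0] using key
    have h4 : ∀ (a : Γ) (g : G) (z : G ⧸ N), n a g z =
        projUnitaryConj H (mu g z)⁻¹ (n a 0 (z + (g : G ⧸ N))) * n 1 g z := by
      intro a g z
      have key := h (1, g) (a, 0) z
      simpa [hlam1, hχ1] using key
    refine ⟨h1, ?_, ?_, h4 a g z⟩
    · have key := h (1, g) (1, hh) z
      simpa [hlam1, hχ1, add_comm] using key
    · have h3l : n a g z =
          projUnitaryConj H (lam a z)⁻¹ (n 1 g (z + χ a)) * n a 0 z := by
        have key := h (a, 0) (1, g) z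
        simpa [hmu0] using key
      exact h3l.symm.trans (h4 a g z)
  · intro h x y z
    obtain ⟨a, g⟩ := x
    obtain ⟨b, hh⟩ := y
    have E1 : ∀ (a b : Γ) (z : G ⧸ N), n (b * a) 0 z =
        projUnitaryConj H (lam a z)⁻¹ (n b 0 (z + χ a)) * n a 0 z :=
      fun a b z => (h a b 0 0 z).1
    have E2 : ∀ (g h' : G) (z : G ⧸ N), n 1 (g + h') z =
        projUnitaryConj H (mu g z)⁻¹ (n 1 h' (z + (g : G ⧸ N))) * n 1 g z :=
      fun g h' z => (h 1 1 g h' z).2.1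
    have E3 : ∀ (a : Γ) (g : G) (z : G ⧸ N),
        projUnitaryConj H (lam a z)⁻¹ (n 1 g (z + χ a)) * n a 0 z =
          projUnitaryConj H (mu g z)⁻¹ (n a 0 (z + (g : G ⧸ N))) * n 1 g z :=
      fun a g z => (h a a g g z).2.2.1
    have E4 : ∀ (a : Γ) (g : G) (z : G ⧸ N), n a g z =
        projUnitaryConj H (mu g z)⁻¹ (n a 0 (z + (g : G ⧸ N))) * n 1 g z :=
      fun a g z => (h a a g g z).2.2.2
    dsimp only
    rw [E4 (b * a) (hh + g) z, hmu hh g z, QuotientAddGroup.mk_add,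
      add_comm hh g, E2 g hh z, E1 a b, E4 b hh, E4 a g]
    have hK := hcomm a hh (z + (g : G ⧸ N))
    have h3 := E3 a hh (z + (g : G ⧸ N))
    simp only [add_comm, add_left_comm, add_assoc] at hK h3 ⊢
    exact statement1_aux (projUnitaryConj H) _ _ _ _ _ _ _ _ _ _ _ hK h3.symm
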